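/- For all integers m ≥ 1 and t ≥ 1, every vertex v of the Koch network K_{m,t} that is not an initial vertex has exactly one neighbor whose degree equals the degree of v, namely the other vertex of the group of two with which v was added. -/

import Mathlib

/-- The triangles of the Koch network `K_{m,t}`: at step `t+1`, each old triangle survives and
each (triangle, corner, group) creates a new triangle. -/
def KochTri (m : ℕ) : ℕ → Type
  | 0 => Unit
  | t+1 => KochTri m t ⊕ (KochTri m t × Fin 3 × Fin m)

/-- The vertices of the Koch network `K_{m,t}`: at step `t+1`, each (triangle, corner, group)
creates two new vertices. -/
def KochVertex (m : ℕ) : ℕ → Type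
  | 0 => Fin 3
  | t+1 => KochVertex m t ⊕ (KochTri m t × Fin 3 × Fin m × Fin 2)

/-- The three corner vertices of each triangle. -/
def KochCorner (m : ℕ) : ∀ t, KochTri m t → Fin 3 → KochVertex m t
  | 0, _, i => i
  | t+1, Sum.inl τ, i => Sum.inl (KochCorner m t τ i)
  | t+1, Sum.inr (τ, c, g), i =>
      ![Sum.inl (KochCorner m t τ c), Sum.inr (τ, c, g, 0), Sum.inr (τ, c, g, 1)] i

instance KochTri.instDecidableEq (m : ℕ) : ∀ t, DecidableEq (KochTri m t)
  | 0 => inferInstanceAs (DecidableEq Unit)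
  | t+1 =>
    letI := KochTri.instDecidableEq m t
    inferInstanceAs (DecidableEq (KochTri m t ⊕ (KochTri m t × Fin 3 × Fin m)))

instance KochVertex.instDecidableEq (m : ℕ) : ∀ t, DecidableEq (KochVertex m t)
  | 0 => inferInstanceAs (DecidableEq (Fin 3))
  | t+1 =>
    letI := KochVertex.instDecidableEq m t
    letI := KochTri.instDecidableEq m t
    inferInstanceAs (DecidableEq (KochVertex m t ⊕ (KochTri m t × Fin 3 × Fin m × Fin 2)))

instance KochTri.instFintype (m : ℕ) : ∀ t, Fintype (KochTri m t)
  | 0 => inferInstanceAs (Fintype Unit)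
  | t+1 =>
    letI := KochTri.instFintype m t
    inferInstanceAs (Fintype (KochTri m t ⊕ (KochTri m t × Fin 3 × Fin m)))

instance KochVertex.instFintype (m : ℕ) : ∀ t, Fintype (KochVertex m t)
  | 0 => inferInstanceAs (Fintype (Fin 3))
  | t+1 =>
    letI := KochVertex.instFintype m t
    letI := KochTri.instFintype m t
    inferInstanceAs (Fintype (KochVertex m t ⊕ (KochTri m t × Fin 3 × Fin m × Fin 2)))

/-- The Koch network `K_{m,t}`: two distinct vertices are adjacent iff they are corners of a
common triangle. -/
def KochGraph (m t : ℕ) : SimpleGraph (KochVertex m t) where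
  Adj u v := u ≠ v ∧ ∃ (τ : KochTri m t) (i j : Fin 3),
      KochCorner m t τ i = u ∧ KochCorner m t τ j = v
  symm := by constructor; rintro u v ⟨hne, τ, i, j, hi, hj⟩; exact ⟨hne.symm, τ, j, i, hj, hi⟩
  loopless := by constructor; rintro u ⟨hne, -⟩; exact hne rfl

instance (m t : ℕ) : DecidableRel (KochGraph m t).Adj := fun u v =>
  inferInstanceAs (Decidable (u ≠ v ∧ ∃ (τ : KochTri m t) (i j : Fin 3),
      KochCorner m t τ i = u ∧ KochCorner m t τ j = v))

/-- The step at which a vertex of `K_{m,t}` was added (initial vertices are added at step 0). -/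
def KochBirth (m : ℕ) : ∀ t, KochVertex m t → ℕ
  | 0, _ => 0
  | t+1, Sum.inl v => KochBirth m t v
  | t+1, Sum.inr _ => t+1

/-- The canonical inclusion of `K_{m,t}` into `K_{m,t+1}`. -/
def KochInl (m t : ℕ) (v : KochVertex m t) : KochVertex m (t+1) := Sum.inl v

/-- The other member of the group of two with which a (non-initial) vertex was added. -/
def KochSibling (m : ℕ) : ∀ t, KochVertex m t → KochVertex m t
  | 0, v => v
  | t+1, Sum.inl v => Sum.inl (KochSibling m t v)
  | t+1, Sum.inr (τ, c, g, p) => Sum.inr (τ, c, g, if p = 0 then 1 else 0)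

/-- The father vertex of a (non-initial) vertex: the existing vertex to which its group of two
was attached. -/
def KochFather (m : ℕ) : ∀ t, KochVertex m t → KochVertex m t
  | 0, v => v
  | t+1, Sum.inl v => Sum.inl (KochFather m t v)
  | t+1, Sum.inr (τ, c, _, _) => Sum.inl (KochCorner m t τ c)

section Helpers

theorem koch_corner_inl (m t : ℕ) (τ : KochTri m t) (i : Fin 3) :
    KochCorner m (t+1) (Sum.inl τ) i = Sum.inl (KochCorner m t τ i) := rfl

theorem koch_corner_inr (m t : ℕ) (τ : KochTri m t) (c : Fin 3) (g : Fin m) (i : Fin 3) :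
    KochCorner m (t+1) (Sum.inr (τ, c, g)) i =
      ![Sum.inl (KochCorner m t τ c), Sum.inr (τ, c, g, 0), Sum.inr (τ, c, g, 1)] i := rfl

theorem koch_corner_injective (m : ℕ) : ∀ t (τ : KochTri m t) (i j : Fin 3),
    KochCorner m t τ i = KochCorner m t τ j → i = j
  | 0, _, i, j, h => h
  | t+1, Sum.inl τ, i, j, h => koch_corner_injective m t τ i j (Sum.inl.inj h)
  | t+1, Sum.inr (τ, c, g), i, j, h => by
      fin_cases i <;> fin_cases j <;>
        first
          | rfl
          | (injection h <;> simp_all [Prod.ext_iff, Fin.ext_iff])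

theorem koch_inl_inj {m t : ℕ} {v w : KochVertex m t} :
    (Sum.inl v : KochVertex m (t+1)) = Sum.inl w ↔ v = w :=
  ⟨Sum.inl.inj, fun h => h ▸ rfl⟩

theorem koch_inl_ne_inr {m t : ℕ} {v : KochVertex m t}
    {x : KochTri m t × Fin 3 × Fin m × Fin 2} :
    (Sum.inl v : KochVertex m (t+1)) ≠ Sum.inr x := fun h => by injection h

theorem koch_inr_inj {m t : ℕ} {x y : KochTri m t × Fin 3 × Fin m × Fin 2} :
    (Sum.inr x : KochVertex m (t+1)) = Sum.inr y ↔ x = y :=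
  ⟨Sum.inr.inj, fun h => h ▸ rfl⟩

theorem koch_corner_inr_cases (m t : ℕ) (τ : KochTri m t) (c : Fin 3) (g : Fin m) (i : Fin 3) :
    KochCorner m (t+1) (Sum.inr (τ, c, g)) i = Sum.inl (KochCorner m t τ c) ∨
    ∃ p : Fin 2, KochCorner m (t+1) (Sum.inr (τ, c, g)) i = Sum.inr (τ, c, g, p) := by
  fin_cases i
  · exact Or.inl rfl
  · exact Or.inr ⟨0, rfl⟩
  · exact Or.inr ⟨1, rfl⟩

theorem koch_vertex_inr_tri_eq {m t : ℕ} {σ σ' : KochTri m t} {c c' : Fin 3} {g g' : Fin m}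
    {q q' : Fin 2} (h : (Sum.inr (σ,c,g,q) : KochVertex m (t+1)) = Sum.inr (σ',c',g',q')) :
    (Sum.inr (σ,c,g) : KochTri m (t+1)) = Sum.inr (σ',c',g') := by
  injection h with h'
  simp only [Prod.mk.injEq] at h'
  obtain ⟨rfl, rfl, rfl, -⟩ := h'
  rfl

theorem koch_tri_eq_of_two (m : ℕ) : ∀ t (τ τ' : KochTri m t) (i j i' j' : Fin 3),
    KochCorner m t τ i = KochCorner m t τ' i' →
    KochCorner m t τ j = KochCorner m t τ' j' →
    KochCorner m t τ i ≠ KochCorner m t τ j → τ = τ'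
  | 0, _, _, _, _, _, _, _, _, _ => rfl
  | t+1, Sum.inl τ, Sum.inl τ', i, j, i', j', h1, h2, hne =>
      congrArg Sum.inl (koch_tri_eq_of_two m t τ τ' i j i' j'
        (Sum.inl.inj h1) (Sum.inl.inj h2) (fun h => hne (congrArg Sum.inl h)))
  | t+1, Sum.inl τ, Sum.inr (σ, c, g), i, j, i', j', h1, h2, hne => by
      rcases koch_corner_inr_cases m t σ c g i' with hi | ⟨p, hp⟩
      · rcases koch_corner_inr_cases m t σ c g j' with hj | ⟨q, hq⟩
        · rw [hi] at h1; rw [hj] at h2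
          exact absurd (h1.trans h2.symm) hne
        · rw [hq] at h2; exact absurd h2 koch_inl_ne_inr
      · rw [hp] at h1; exact absurd h1 koch_inl_ne_inr
  | t+1, Sum.inr (σ, c, g), Sum.inl τ, i, j, i', j', h1, h2, hne => by
      rcases koch_corner_inr_cases m t σ c g i with hi | ⟨p, hp⟩
      · rcases koch_corner_inr_cases m t σ c g j with hj | ⟨q, hq⟩
        · exact absurd (hi.trans hj.symm) hne
        · rw [hq] at h2; exact absurd h2.symm koch_inl_ne_inr
      · rw [hp] at h1; exact absurd h1.symm koch_inl_ne_inr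
  | t+1, Sum.inr (σ, c, g), Sum.inr (σ', c', g'), i, j, i', j', h1, h2, hne => by
      rcases koch_corner_inr_cases m t σ c g i with hi | ⟨p, hp⟩
      · rcases koch_corner_inr_cases m t σ' c' g' i' with hi' | ⟨p', hp'⟩
        · rcases koch_corner_inr_cases m t σ c g j with hj | ⟨q, hq⟩
          · exact absurd (hi.trans hj.symm) hne
          · rcases koch_corner_inr_cases m t σ' c' g' j' with hj' | ⟨q', hq'⟩
            · rw [hq, hj'] at h2; exact absurd h2.symm koch_inl_ne_inr
            · rw [hq, hq'] at h2; exact koch_vertex_inr_tri_eq h2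
        · rw [hi, hp'] at h1; exact absurd h1 koch_inl_ne_inr
      · rcases koch_corner_inr_cases m t σ' c' g' i' with hi' | ⟨p', hp'⟩
        · rw [hp, hi'] at h1; exact absurd h1.symm koch_inl_ne_inr
        · rw [hp, hp'] at h1; exact koch_vertex_inr_tri_eq h1

end Helpers
section Helpers3

theorem koch_birth_le (m : ℕ) : ∀ t (v : KochVertex m t), KochBirth m t v ≤ t
  | 0, _ => le_refl 0
  | t+1, Sum.inl v => (koch_birth_le m t v).trans (Nat.le_succ t)
  | _+1, Sum.inr _ => le_refl _

theorem koch_birth_sibling (m : ℕ) : ∀ t (v : KochVertex m t),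
    KochBirth m t (KochSibling m t v) = KochBirth m t v
  | 0, _ => rfl
  | t+1, Sum.inl v => koch_birth_sibling m t v
  | _+1, Sum.inr _ => rfl

theorem koch_adj_lift (m t : ℕ) {v u : KochVertex m t} (h : (KochGraph m t).Adj v u) :
    (KochGraph m (t+1)).Adj (Sum.inl v) (Sum.inl u) := by
  obtain ⟨hne, τ, i, j, hi, hj⟩ := h
  exact ⟨fun h => hne (Sum.inl.inj h), Sum.inl τ, i, j,
    congrArg Sum.inl hi, congrArg Sum.inl hj⟩

theorem koch_adj_sibling (m : ℕ) : ∀ t (v : KochVertex m t), KochBirth m t v ≠ 0 →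
    (KochGraph m t).Adj v (KochSibling m t v)
  | 0, _, hv => absurd rfl hv
  | t+1, Sum.inl v, hv => koch_adj_lift m t (koch_adj_sibling m t v hv)
  | t+1, Sum.inr (τ, c, g, ⟨0, h0⟩), _ => by
      refine ⟨fun h => ?_, Sum.inr (τ, c, g), 1, 2, rfl, rfl⟩
      rw [show (KochSibling m (t+1) (Sum.inr (τ, c, g, ⟨0, h0⟩))) = Sum.inr (τ, c, g, 1)
        from rfl] at h; replace h := koch_inr_inj.1 h
      simp [Prod.ext_iff, Fin.ext_iff] at h
  | t+1, Sum.inr (τ, c, g, ⟨1, h0⟩), _ => by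
      refine ⟨fun h => ?_, Sum.inr (τ, c, g), 2, 1, rfl, rfl⟩
      rw [show (KochSibling m (t+1) (Sum.inr (τ, c, g, ⟨1, h0⟩))) = Sum.inr (τ, c, g, 0)
        from rfl] at h; replace h := koch_inr_inj.1 h
      simp [Prod.ext_iff, Fin.ext_iff] at h
  | t+1, Sum.inr (τ, c, g, ⟨n+2, h0⟩), _ => absurd h0 (by omega)

theorem koch_eq_sibling_of_adj_birth (m : ℕ) : ∀ t (v u : KochVertex m t),
    (KochGraph m t).Adj v u → KochBirth m t v ≠ 0 →
    KochBirth m t u = KochBirth m t v → u = KochSibling m t v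
  | 0, _, _, _, hv, _ => absurd rfl hv
  | t+1, Sum.inl w, Sum.inl x, hadj, hv, hb => by
      obtain ⟨hne, τ', i, j, hi, hj⟩ := hadj
      have hne' : w ≠ x := fun h => hne (by rw [h])
      match τ' with
      | Sum.inl τ =>
          have hadj' : (KochGraph m t).Adj w x :=
            ⟨hne', τ, i, j, Sum.inl.inj hi, Sum.inl.inj hj⟩
          exact congrArg Sum.inl
            (koch_eq_sibling_of_adj_birth m t w x hadj' hv hb)
      | Sum.inr (σ, c, g) =>
          exfalso
          rcases koch_corner_inr_cases m t σ c g i with h1 | ⟨p, h1⟩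
          · rcases koch_corner_inr_cases m t σ c g j with h2 | ⟨q, h2⟩
            · rw [h1] at hi; rw [h2] at hj
              exact hne' (Sum.inl.inj (hi.symm.trans hj))
            · rw [h2] at hj; exact koch_inl_ne_inr hj.symm
          · rw [h1] at hi; exact koch_inl_ne_inr hi.symm
  | t+1, Sum.inl w, Sum.inr x, hadj, hv, hb => by
      exfalso
      have h1 : KochBirth m (t+1) (Sum.inr x) = t+1 := rfl
      have h2 : KochBirth m (t+1) (Sum.inl w) = KochBirth m t w := rfl
      have := koch_birth_le m t w
      omega
  | t+1, Sum.inr x, Sum.inl w, hadj, hv, hb => by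
      exfalso
      have h1 : KochBirth m (t+1) (Sum.inr x) = t+1 := rfl
      have h2 : KochBirth m (t+1) (Sum.inl w) = KochBirth m t w := rfl
      have := koch_birth_le m t w
      omega
  | t+1, Sum.inr (τ, c, g, p), Sum.inr (τ', c', g', p'), hadj, hv, hb => by
      obtain ⟨hne, τ'', i, j, hi, hj⟩ := hadj
      match τ'' with
      | Sum.inl σ => exact absurd hi koch_inl_ne_inr
      | Sum.inr (σ, cc, gg) =>
          rcases koch_corner_inr_cases m t σ cc gg i with h1 | ⟨q, h1⟩
          · rw [h1] at hi; exact absurd hi koch_inl_ne_inr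
          · rcases koch_corner_inr_cases m t σ cc gg j with h2 | ⟨q', h2⟩
            · rw [h2] at hj; exact absurd hj koch_inl_ne_inr
            · rw [h1] at hi; rw [h2] at hj
              replace hi := koch_inr_inj.1 hi; replace hj := koch_inr_inj.1 hj
              simp only [Prod.mk.injEq] at hi hj
              obtain ⟨e1, e2, e3, e4⟩ := hi
              obtain ⟨f1, f2, f3, f4⟩ := hj
              have hττ : τ' = τ := f1.symm.trans e1
              have hcc : c' = c := f2.symm.trans e2
              have hgg : g' = g := f3.symm.trans e3
              have hpp' : p' ≠ p := by
                intro h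
                exact hne (by rw [hττ, hcc, hgg, h])
              have hval : p' = if p = 0 then 1 else 0 := by
                revert hpp'; fin_cases p <;> fin_cases p' <;> decide
              rw [show KochSibling m (t+1) (Sum.inr (τ, c, g, p))
                  = Sum.inr (τ, c, g, if p = 0 then 1 else 0) from rfl]; apply koch_inr_inj.2
              simp only [Prod.mk.injEq]
              exact ⟨hττ, hcc, hgg, hval⟩

end Helpers3
section Counting

def kochTriCount (m t : ℕ) (v : KochVertex m t) : ℕ :=
  (Finset.univ.filter fun τ : KochTri m t => ∃ i, KochCorner m t τ i = v).card

theorem koch_degree_eq_two_mul (m t : ℕ) (v : KochVertex m t) :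
    (KochGraph m t).degree v = 2 * kochTriCount m t v := by
  classical
  rw [← SimpleGraph.card_neighborFinset_eq_degree]
  have hset : (KochGraph m t).neighborFinset v =
      (Finset.univ.filter fun τ : KochTri m t => ∃ i, KochCorner m t τ i = v).biUnion
        (fun τ => (Finset.univ.image (KochCorner m t τ)).erase v) := by
    ext u
    simp only [SimpleGraph.mem_neighborFinset, Finset.mem_biUnion, Finset.mem_filter,
      Finset.mem_univ, true_and, Finset.mem_erase, Finset.mem_image]
    constructor
    · rintro ⟨hne, τ, i, j, hi, hj⟩
      exact ⟨τ, ⟨i, hi⟩, fun h => hne h.symm, ⟨j, hj⟩⟩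
    · rintro ⟨τ, ⟨i, hi⟩, hne, j, hj⟩
      exact ⟨fun h => hne h.symm, τ, i, j, hi, hj⟩
  rw [hset, Finset.card_biUnion]
  · have h2 : ∀ τ ∈ (Finset.univ.filter
        fun τ : KochTri m t => ∃ i, KochCorner m t τ i = v),
        ((Finset.univ.image (KochCorner m t τ)).erase v).card = 2 := by
      intro τ hτ
      obtain ⟨i, hi⟩ := (Finset.mem_filter.1 hτ).2
      have hmem : v ∈ Finset.univ.image (KochCorner m t τ) :=
        Finset.mem_image.2 ⟨i, Finset.mem_univ i, hi⟩
      rw [Finset.card_erase_of_mem hmem,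
        Finset.card_image_of_injective _ (fun a b => koch_corner_injective m t τ a b),
        Finset.card_univ]
      rfl
    rw [Finset.sum_congr rfl h2, Finset.sum_const, smul_eq_mul, mul_comm]
    rfl
  · intro τ hτ τ' hτ' hne
    obtain ⟨i0, hi0⟩ := (Finset.mem_filter.1 hτ).2
    obtain ⟨i0', hi0'⟩ := (Finset.mem_filter.1 hτ').2
    rw [Function.onFun, Finset.disjoint_left]
    intro u hu hu'
    obtain ⟨hune, j0, _, hj0⟩ := by
      simpa only [Finset.mem_erase, Finset.mem_image] using hu
    obtain ⟨_, j0', _, hj0'⟩ := by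
      simpa only [Finset.mem_erase, Finset.mem_image] using hu'
    exact hne (koch_tri_eq_of_two m t τ τ' i0 j0 i0' j0'
      (hi0.trans hi0'.symm) (hj0.trans hj0'.symm)
      (by rw [hi0, hj0]; exact fun h => hune h.symm))

def kochSumSubtypeEquiv {α β : Type*} (p : α ⊕ β → Prop) :
    {x : α ⊕ β // p x} ≃ {a : α // p (Sum.inl a)} ⊕ {b : β // p (Sum.inr b)} where
  toFun := fun x => match x with
    | ⟨Sum.inl a, h⟩ => Sum.inl ⟨a, h⟩
    | ⟨Sum.inr b, h⟩ => Sum.inr ⟨b, h⟩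
  invFun := fun x => match x with
    | Sum.inl a => ⟨Sum.inl a.1, a.2⟩
    | Sum.inr b => ⟨Sum.inr b.1, b.2⟩
  left_inv := by rintro ⟨a | b, h⟩ <;> rfl
  right_inv := by rintro (⟨a, h⟩ | ⟨b, h⟩) <;> rfl

noncomputable def kochTripleEquiv (m t : ℕ) (w : KochVertex m t) :
    {x : KochTri m t × Fin 3 × Fin m // KochCorner m t x.1 x.2.1 = w} ≃
    ({σ : KochTri m t // ∃ c, KochCorner m t σ c = w} × Fin m) where
  toFun x := (⟨x.1.1, x.1.2.1, x.2⟩, x.1.2.2)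
  invFun y := ⟨(y.1.1, Classical.choose y.1.2, y.2), Classical.choose_spec y.1.2⟩
  left_inv := by
    rintro ⟨⟨σ, c, g⟩, h⟩
    have hc : ∀ hex : ∃ c', KochCorner m t σ c' = w, Classical.choose hex = c :=
      fun hex => koch_corner_injective m t σ _ c
        ((Classical.choose_spec hex).trans h.symm)
    refine Subtype.ext ?_
    dsimp
    rw [hc]
  right_inv := by rintro ⟨⟨σ, hσ⟩, g⟩; rfl

theorem kochTriCount_card (m t : ℕ) (v : KochVertex m t) :
    kochTriCount m t v = Fintype.card {τ : KochTri m t // ∃ i, KochCorner m t τ i = v} :=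
  (Fintype.card_subtype _).symm

theorem kochTriCount_formula (m : ℕ) : ∀ t (v : KochVertex m t),
    kochTriCount m t v = (m+1) ^ (t - KochBirth m t v)
  | 0, v => by
      have hall : ∀ τ : KochTri m 0, τ ∈ (Finset.univ : Finset (KochTri m 0)) →
          ∃ i, KochCorner m 0 τ i = v := fun τ _ => ⟨v, rfl⟩
      rw [kochTriCount, Finset.filter_true_of_mem hall, Finset.card_univ]
      have h1 : Fintype.card (KochTri m 0) = 1 :=
        Fintype.card_eq_one_iff.2 ⟨show KochTri m 0 from (), fun x => rfl⟩
      rw [h1]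
      rfl
  | t+1, Sum.inl w => by
      classical
      have e1 : {τ : KochTri m (t+1) // ∃ i, KochCorner m (t+1) τ i = Sum.inl w} ≃
          ({σ : KochTri m t // ∃ i, KochCorner m (t+1) (Sum.inl σ) i = Sum.inl w} ⊕
           {x : KochTri m t × Fin 3 × Fin m //
              ∃ i, KochCorner m (t+1) (Sum.inr x) i = Sum.inl w}) :=
        kochSumSubtypeEquiv _
      have e2 : {σ : KochTri m t // ∃ i, KochCorner m (t+1) (Sum.inl σ) i = Sum.inl w} ≃
          {σ : KochTri m t // ∃ i, KochCorner m t σ i = w} :=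
        Equiv.subtypeEquivRight (fun σ =>
          ⟨fun ⟨i, hi⟩ => ⟨i, Sum.inl.inj hi⟩, fun ⟨i, hi⟩ => ⟨i, congrArg Sum.inl hi⟩⟩)
      have e3 : {x : KochTri m t × Fin 3 × Fin m //
            ∃ i, KochCorner m (t+1) (Sum.inr x) i = Sum.inl w} ≃
          {x : KochTri m t × Fin 3 × Fin m // KochCorner m t x.1 x.2.1 = w} := by
        refine Equiv.subtypeEquivRight (fun x => ?_)
        obtain ⟨σ, c, g⟩ := x
        constructor
        · rintro ⟨i, hi⟩
          rcases koch_corner_inr_cases m t σ c g i with h1 | ⟨q, h1⟩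
          · rw [h1] at hi; exact Sum.inl.inj hi
          · rw [h1] at hi; exact absurd hi.symm koch_inl_ne_inr
        · intro h
          exact ⟨0, congrArg Sum.inl h⟩
      have hcard : kochTriCount m (t+1) (Sum.inl w) = (m+1) * kochTriCount m t w := by
        rw [kochTriCount_card m (t+1) (Sum.inl w)]; refine Eq.trans (by convert rfl) ((Fintype.card_congr e1).trans ?_); rw [Fintype.card_sum,
          Fintype.card_congr e2, Fintype.card_congr (e3.trans (kochTripleEquiv m t w)),
          Fintype.card_prod, Fintype.card_fin, ← kochTriCount_card]
        ring
      have hble := koch_birth_le m t w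
      have hbirth : KochBirth m (t+1) (Sum.inl w) = KochBirth m t w := rfl
      rw [hcard, kochTriCount_formula m t w, hbirth,
        show t + 1 - KochBirth m t w = (t - KochBirth m t w) + 1 from by omega,
        pow_succ]
      ring
  | t+1, Sum.inr (τ0, c0, g0, p0) => by
      classical
      have e1 : {τ : KochTri m (t+1) //
            ∃ i, KochCorner m (t+1) τ i = Sum.inr (τ0, c0, g0, p0)} ≃
          ({σ : KochTri m t //
              ∃ i, KochCorner m (t+1) (Sum.inl σ) i = Sum.inr (τ0, c0, g0, p0)} ⊕
           {x : KochTri m t × Fin 3 × Fin m //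
              ∃ i, KochCorner m (t+1) (Sum.inr x) i = Sum.inr (τ0, c0, g0, p0)}) :=
        kochSumSubtypeEquiv _
      have hc1 : Fintype.card {σ : KochTri m t //
          ∃ i, KochCorner m (t+1) (Sum.inl σ) i = Sum.inr (τ0, c0, g0, p0)} = 0 :=
        Fintype.card_eq_zero_iff.2 ⟨fun ⟨σ, i, hi⟩ => koch_inl_ne_inr hi⟩
      have hprop : ∀ x : KochTri m t × Fin 3 × Fin m,
          (∃ i, KochCorner m (t+1) (Sum.inr x) i = Sum.inr (τ0, c0, g0, p0)) ↔
            x = (τ0, c0, g0) := by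
        rintro ⟨σ, cc, gg⟩
        constructor
        · rintro ⟨i, hi⟩
          rcases koch_corner_inr_cases m t σ cc gg i with h1 | ⟨q, h1⟩
          · rw [h1] at hi; exact absurd hi koch_inl_ne_inr
          · rw [h1] at hi; replace hi := koch_inr_inj.1 hi
            simp only [Prod.mk.injEq] at hi
            simp only [Prod.mk.injEq]
            exact ⟨hi.1, hi.2.1, hi.2.2.1⟩
        · intro h
          simp only [Prod.mk.injEq] at h
          obtain ⟨rfl, rfl, rfl⟩ := h
          fin_cases p0
          · exact ⟨1, rfl⟩
          · exact ⟨2, rfl⟩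
      have hc2 : Fintype.card {x : KochTri m t × Fin 3 × Fin m //
          ∃ i, KochCorner m (t+1) (Sum.inr x) i = Sum.inr (τ0, c0, g0, p0)} = 1 := by
        rw [Fintype.card_congr (Equiv.subtypeEquivRight hprop)]
        exact Fintype.card_subtype_eq _
      rw [kochTriCount_card m (t+1) (Sum.inr (τ0, c0, g0, p0))]; refine Eq.trans (by convert rfl) ((Fintype.card_congr e1).trans ?_); rw [Fintype.card_sum, hc1, hc2]
      have hbirth : KochBirth m (t+1)
          (Sum.inr (τ0, c0, g0, p0) : KochVertex m (t+1)) = t+1 := rfl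
      rw [hbirth]
      simp

theorem koch_degree_formula (m t : ℕ) (v : KochVertex m t) :
    (KochGraph m t).degree v = 2 * (m+1) ^ (t - KochBirth m t v) := by
  rw [koch_degree_eq_two_mul, kochTriCount_formula]

end Counting
/-- For all integers m ≥ 1 and t ≥ 1, every vertex v of the Koch network
`K_{m,t}` that is not an initial vertex has exactly one neighbor whose degree equals the degree
of v, namely the other vertex (`KochSibling`) of the group of two with which v was added. -/
theorem koch_equal_degree_neighbor (m t : ℕ) (hm : 1 ≤ m) (ht : 1 ≤ t)
    (v : KochVertex m t) (hv : KochBirth m t v ≠ 0) :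
    (KochGraph m t).Adj v (KochSibling m t v)
    ∧ (KochGraph m t).degree (KochSibling m t v) = (KochGraph m t).degree v
    ∧ ∀ u : KochVertex m t, (KochGraph m t).Adj v u →
        (KochGraph m t).degree u = (KochGraph m t).degree v → u = KochSibling m t v := by
  refine ⟨koch_adj_sibling m t v hv, ?_, ?_⟩
  · rw [koch_degree_formula, koch_degree_formula, koch_birth_sibling]
  · intro u hadj hdeg
    rw [koch_degree_formula, koch_degree_formula] at hdeg
    have h2 : (m+1) ^ (t - KochBirth m t u) = (m+1) ^ (t - KochBirth m t v) := by omega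
    have hexp : t - KochBirth m t u = t - KochBirth m t v :=
      Nat.pow_right_injective (by omega) h2
    have hb : KochBirth m t u = KochBirth m t v := by
      have h1 := koch_birth_le m t u
      have h2 := koch_birth_le m t v
      omega
    exact koch_eq_sibling_of_adj_birth m t v u hadj hv hb
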